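/- Let (Ē, [[·,·]], ρ) be a skew-symmetric algebroid over Q and F : Ē → Ē a vector bundle homomorphism over the identity of Q. Define on E = ℝ × Ē the bracket [[(f,σ),(g,γ)]] = (ρ(σ)(g) − ρ(γ)(f), [[σ,γ]] + g F(σ) − f F(γ)) and anchor ρ_E(f,σ) = ρ(σ), where sections of E are identified with pairs (f,σ) ∈ C^∞(Q) × Γ(Ē). Then ([[·,·]]_E, ρ_E) is a skew-symmetric algebroid structure on E, i.e., the bracket is skew-symmetric, ℝ-bilinear, and satisfies the Leibniz rule with respect to ρ_E. -/
import Mathlib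


/-- Given a skew-symmetric algebroid `Ē` (algebraic model: `R = C^∞(Q)`,
`Ebar = Γ(Ē)`, anchor into derivations of `R`) and a bundle homomorphism `F : Ē → Ē`
(an `R`-linear map on sections), the bracket
`[[(f,σ),(g,γ)]] = (ρ(σ)(g) − ρ(γ)(f), [[σ,γ]] + g•F(σ) − f•F(γ))` and anchor
`ρ_E(f,σ) = ρ(σ)` define a skew-symmetric algebroid structure on `E = ℝ × Ē`
(sections `R × Γ(Ē)`): the bracket is skew-symmetric, ℝ-bilinear and satisfies the
Leibniz rule with respect to `ρ_E`. -/
theorem prod_skew_algebroid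
    {R : Type*} [CommRing R] [Algebra ℝ R]
    {Ebar : Type*} [AddCommGroup Ebar] [Module ℝ Ebar] [Module R Ebar]
    [IsScalarTower ℝ R Ebar]
    (bracket : Ebar → Ebar → Ebar) (anchor : Ebar →ₗ[R] Derivation ℝ R R)
    (F : Ebar →ₗ[R] Ebar)
    (hadd_left : ∀ σ₁ σ₂ γ : Ebar, bracket (σ₁ + σ₂) γ = bracket σ₁ γ + bracket σ₂ γ)
    (hsmul_left : ∀ (c : ℝ) (σ γ : Ebar), bracket (c • σ) γ = c • bracket σ γ)
    (hskew : ∀ σ γ : Ebar, bracket σ γ = - bracket γ σ)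
    (hleibniz : ∀ (σ γ : Ebar) (f : R),
      bracket σ (f • γ) = f • bracket σ γ + anchor σ f • γ) :
    -- the induced bracket on `Γ(ℝ × Ē) = R × Γ(Ē)`
    ∀ Lb : (R × Ebar) → (R × Ebar) → (R × Ebar),
      (Lb = fun s t =>
          (anchor s.2 t.1 - anchor t.2 s.1,
            bracket s.2 t.2 + t.1 • F s.2 - s.1 • F t.2)) →
      -- skew-symmetry
      ((∀ s t : R × Ebar, Lb s t = - Lb t s) ∧
      -- ℝ-bilinearity
      (∀ s₁ s₂ t : R × Ebar, Lb (s₁ + s₂) t = Lb s₁ t + Lb s₂ t) ∧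
      (∀ (c : ℝ) (s t : R × Ebar), Lb (c • s) t = c • Lb s t) ∧
      (∀ s t₁ t₂ : R × Ebar, Lb s (t₁ + t₂) = Lb s t₁ + Lb s t₂) ∧
      (∀ (c : ℝ) (s t : R × Ebar), Lb s (c • t) = c • Lb s t) ∧
      -- Leibniz rule with respect to the anchor `ρ_E(f,σ) = ρ(σ)`
      (∀ (s t : R × Ebar) (f : R), Lb s (f • t) = f • Lb s t + anchor s.2 f • t)) := by
  intro Lb hLb
  subst hLb
  have hadd_right : ∀ σ γ₁ γ₂ : Ebar,
      bracket σ (γ₁ + γ₂) = bracket σ γ₁ + bracket σ γ₂ := by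
    intro σ γ₁ γ₂
    rw [hskew, hadd_left, neg_add, ← hskew, ← hskew]
  have hsmul_right : ∀ (c : ℝ) (σ γ : Ebar),
      bracket σ (c • γ) = c • bracket σ γ := by
    intro c σ γ
    rw [hskew, hsmul_left, ← smul_neg, ← hskew]
  refine ⟨?_, ?_, ?_, ?_, ?_, ?_⟩
  · intro s t
    refine Prod.ext ?_ ?_
    · simp only [Prod.fst_neg]; ring
    · simp only [Prod.snd_neg]
      rw [hskew s.2 t.2]; abel
  · intro s₁ s₂ t
    refine Prod.ext ?_ ?_
    · simp only [Prod.fst_add, Prod.snd_add, map_add, Derivation.add_apply]; ring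
    · simp only [Prod.fst_add, Prod.snd_add, hadd_left, map_add, smul_add, add_smul]
      abel
  · intro c s t
    refine Prod.ext ?_ ?_
    · simp only [Prod.smul_fst, Prod.smul_snd, smul_eq_mul]
      rw [← algebraMap_smul R c s.2, map_smul]
      simp [Derivation.smul_apply, Derivation.map_smul, Algebra.smul_def]
      ring
    · simp only [Prod.smul_fst, Prod.smul_snd]
      rw [hsmul_left, ← algebraMap_smul R c s.2, map_smul,
        smul_comm t.1 ((algebraMap ℝ R) c), algebraMap_smul, smul_assoc,
        smul_sub, smul_add]
  · intro s t₁ t₂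
    refine Prod.ext ?_ ?_
    · simp only [Prod.fst_add, Prod.snd_add, map_add, Derivation.add_apply]; ring
    · simp only [Prod.fst_add, Prod.snd_add, hadd_right, map_add, smul_add, add_smul]
      abel
  · intro c s t
    refine Prod.ext ?_ ?_
    · simp only [Prod.smul_fst, Prod.smul_snd, smul_eq_mul]
      rw [← algebraMap_smul R c t.2, anchor.map_smul]
      simp [Derivation.smul_apply, Derivation.map_smul, Algebra.smul_def]
      ring
    · simp only [Prod.smul_fst, Prod.smul_snd]
      rw [hsmul_right, ← algebraMap_smul R c t.2, map_smul,
        smul_comm s.1 ((algebraMap ℝ R) c), algebraMap_smul, smul_assoc,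
        smul_sub, smul_add]
  · intro s t f
    refine Prod.ext ?_ ?_
    · simp only [Prod.smul_fst, Prod.fst_add, Prod.smul_snd, smul_eq_mul,
        Derivation.leibniz, map_smul, Derivation.smul_apply]
      ring
    · simp only [Prod.smul_fst, Prod.smul_snd, Prod.snd_add, smul_eq_mul,
        hleibniz, map_smul, smul_add, smul_sub, mul_smul]
      rw [smul_comm s.1 f]
      abel
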